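/- Let f ∈ R(r) with r > 1 be differentiable with f' monotone. Then x f'(x) ∼ r f(x) as x → ∞. -/

import Mathlib

open Filter Set

private lemma key_mvt (f : ℝ → ℝ) (hdiff : DifferentiableOn ℝ f (Set.Ioi 0))
    (hmono : MonotoneOn (deriv f) (Set.Ioi 0)) {x l : ℝ} (hx : 0 < x) (hl : 1 < l) :
    (l - 1) * x * deriv f x ≤ f (l * x) - f x ∧
      f (l * x) - f x ≤ (l - 1) * x * deriv f (l * x) := by
  have hxl : x < l * x := by nlinarith
  have hsub : Set.Icc x (l * x) ⊆ Set.Ioi 0 := fun y hy => lt_of_lt_of_le hx hy.1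
  have hc : ContinuousOn f (Set.Icc x (l * x)) := hdiff.continuousOn.mono hsub
  have hd : DifferentiableOn ℝ f (Set.Ioo x (l * x)) :=
    hdiff.mono fun y hy => hsub ⟨hy.1.le, hy.2.le⟩
  obtain ⟨c, hcm, hceq⟩ := exists_deriv_eq_slope f hxl hc hd
  have hcI : c ∈ Set.Ioi 0 := hsub ⟨hcm.1.le, hcm.2.le⟩
  have h1 : deriv f x ≤ deriv f c := hmono hx hcI hcm.1.le
  have h2 : deriv f c ≤ deriv f (l * x) := hmono hcI (hsub ⟨hxl.le, le_refl _⟩) hcm.2.le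
  rw [hceq] at h1 h2
  rw [show l * x - x = (l - 1) * x by ring] at h1 h2
  have hpos : 0 < (l - 1) * x := by nlinarith
  have hA := (le_div_iff₀ hpos).mp h1
  have hB := (div_le_iff₀ hpos).mp h2
  constructor <;> nlinarith [hA, hB]

private lemma slope1 (r : ℝ) :
    Tendsto (fun l : ℝ => (l ^ r - 1) / (l - 1)) (nhdsWithin 1 (Set.Ioi 1)) (nhds r) := by
  have hd : HasDerivAt (fun t : ℝ => t ^ r) r 1 := by
    have := Real.hasDerivAt_rpow_const (p := r) (x := 1) (Or.inl one_ne_zero)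
    simpa using this
  have h := hasDerivAt_iff_tendsto_slope.mp hd
  have h2 := h.mono_left (nhdsWithin_mono 1 (fun y hy => ne_of_gt hy))
  refine h2.congr fun l => ?_
  rw [slope_def_field]
  simp [Real.one_rpow]

private lemma slope2 (r : ℝ) :
    Tendsto (fun l : ℝ => (l - l ^ (1 - r)) / (l - 1)) (nhdsWithin 1 (Set.Ioi 1)) (nhds r) := by
  have hd : HasDerivAt (fun t : ℝ => t - t ^ (1 - r)) r 1 := by
    have h1 := Real.hasDerivAt_rpow_const (p := 1 - r) (x := 1) (Or.inl one_ne_zero)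
    have := (hasDerivAt_id (1 : ℝ)).sub h1
    exact this.congr_deriv (by simp [Real.one_rpow])
  have h := hasDerivAt_iff_tendsto_slope.mp hd
  have h2 := h.mono_left (nhdsWithin_mono 1 (fun y hy => ne_of_gt hy))
  refine h2.congr fun l => ?_
  rw [slope_def_field]
  simp [Real.one_rpow]

theorem stmt_12 (f : ℝ → ℝ) (r : ℝ) (hr : 1 < r)
    (hfpos : ∀ x > 0, 0 < f x)
    (hreg : ∀ l > 0, Tendsto (fun x => f (l * x) / f x) atTop (nhds (l ^ r)))
    (hdiff : DifferentiableOn ℝ f (Set.Ioi 0))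
    (hmono : MonotoneOn (deriv f) (Set.Ioi 0)) :
    Tendsto (fun x => x * deriv f x / f x) atTop (nhds r) := by
  rw [tendsto_order]
  constructor
  · -- lower bound: ∀ a < r, eventually a < g x
    intro a ha
    obtain ⟨μ, hμa, hμ1'⟩ :=
      (((slope2 r).eventually_const_lt ha).and eventually_mem_nhdsWithin).exists
    have hμ1 : (1 : ℝ) < μ := hμ1'
    have hμpos : (0 : ℝ) < μ := lt_trans one_pos hμ1
    set A : ℝ := μ ^ (-r) with hA_def
    have hApos : 0 < A := Real.rpow_pos_of_pos hμpos _
    have h1r : μ ^ (1 - r) = μ * A := by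
      rw [show (1 : ℝ) - r = 1 + -r by ring, Real.rpow_add hμpos, Real.rpow_one]
    have haμ : a * (μ - 1) < μ * (1 - A) := by
      have h := (lt_div_iff₀ (by linarith : (0:ℝ) < μ - 1)).mp hμa
      rw [h1r] at h
      nlinarith
    set δ : ℝ := (μ * (1 - A) - a * (μ - 1)) / (2 * μ) with hδ_def
    have hδpos : 0 < δ := by
      apply div_pos (by linarith) (by linarith)
    have hμδ : μ * δ = (μ * (1 - A) - a * (μ - 1)) / 2 := by
      rw [hδ_def]; field_simp
    have hδ2 : a * (μ - 1) < μ * (1 - A - δ) := by nlinarith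
    have hinv : (1 / μ : ℝ) ^ r = A := by
      rw [one_div, Real.inv_rpow hμpos.le, hA_def, Real.rpow_neg hμpos.le]
    have htd := hreg (1 / μ) (by positivity)
    rw [hinv] at htd
    have heven : ∀ᶠ x in atTop, f (1 / μ * x) / f x < A + δ :=
      htd.eventually_lt_const (by linarith)
    filter_upwards [heven, eventually_gt_atTop 0] with x hx1 hx0
    have hF : 0 < f x := hfpos x hx0
    have hxμ : 0 < x / μ := div_pos hx0 hμpos
    have hkey := (key_mvt f hdiff hmono hxμ hμ1).2
    rw [show μ * (x / μ) = x by field_simp] at hkey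
    -- hkey : f x - f (x / μ) ≤ (μ - 1) * (x / μ) * deriv f x
    have hkey' : μ * (f x - f (x / μ)) ≤ (μ - 1) * x * deriv f x := by
      have h := mul_le_mul_of_nonneg_left hkey hμpos.le
      have heq : μ * ((μ - 1) * (x / μ) * deriv f x) = (μ - 1) * x * deriv f x := by
        field_simp
      linarith [heq ▸ h]
    rw [show (1 / μ) * x = x / μ by ring] at hx1
    have hG : f (x / μ) < (A + δ) * f x := (div_lt_iff₀ hF).mp hx1
    rw [lt_div_iff₀ hF]
    nlinarith [mul_lt_mul_of_pos_right hδ2 hF, mul_lt_mul_of_pos_left hG hμpos]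
  · -- upper bound
    intro b hb
    obtain ⟨l, hlb, hl1'⟩ :=
      (((slope1 r).eventually_lt_const hb).and eventually_mem_nhdsWithin).exists
    have hl1 : (1 : ℝ) < l := hl1'
    have hlpos : (0 : ℝ) < l := lt_trans one_pos hl1
    have hlb' : l ^ r - 1 < b * (l - 1) :=
      (div_lt_iff₀ (by linarith : (0:ℝ) < l - 1)).mp hlb
    set δ : ℝ := (b * (l - 1) - (l ^ r - 1)) / 2 with hδ_def
    have hδpos : 0 < δ := by apply div_pos (by linarith) two_pos
    have heven : ∀ᶠ x in atTop, f (l * x) / f x < l ^ r + δ :=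
      (hreg l hlpos).eventually_lt_const (by linarith)
    filter_upwards [heven, eventually_gt_atTop 0] with x hx1 hx0
    have hF : 0 < f x := hfpos x hx0
    have hkey := (key_mvt f hdiff hmono hx0 hl1).1
    -- hkey : (l - 1) * x * deriv f x ≤ f (l * x) - f x
    have hG : f (l * x) < (l ^ r + δ) * f x := (div_lt_iff₀ hF).mp hx1
    rw [div_lt_iff₀ hF]
    nlinarith [mul_lt_mul_of_pos_right hlb' hF]
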